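/- Let M be a set system on [n]. The following are equivalent: (1) M is an even Δ-matroid, i.e. M is an even set system satisfying the symmetric exchange property; (2) M satisfies the strong exchange property for even Δ-matroids: for all distinct A, B ∈ M there exist distinct a, b ∈ A Δ B such that A Δ {a,b} ∈ M and B Δ {a,b} ∈ M; (3) M satisfies Wenzel's exchange property: for all A, B ∈ M and every a ∈ A Δ B there exists b ∈ (A Δ B) \ {a} such that A Δ {a,b} ∈ M and B Δ {a,b} ∈ M. -/
import Mathlib


open scoped symmDiff

/-- The symmetric exchange property for Δ-matroids. -/
def SymmetricExchange {n : ℕ} (M : Finset (Finset (Fin n))) : Prop :=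
  ∀ A ∈ M, ∀ B ∈ M, ∀ a ∈ A ∆ B, ∃ b ∈ A ∆ B, A ∆ {a, b} ∈ M

namespace EvenDeltaAux

open Finset

variable {α : Type*} [DecidableEq α]

lemma card_symmDiff_add (s t : Finset α) :
    (s ∆ t).card + 2 * (s ∩ t).card = s.card + t.card := by
  have h1 : s ∆ t = (s \ t) ∪ (t \ s) := by rw [symmDiff_def]; rfl
  have hd : Disjoint (s \ t) (t \ s) := disjoint_sdiff_sdiff
  have h2 : (s ∆ t).card = (s \ t).card + (t \ s).card := by
    rw [h1, card_union_of_disjoint hd]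
  have h3 : (s \ t).card + (s ∩ t).card = s.card := card_sdiff_add_card_inter s t
  have h4 : (t \ s).card + (t ∩ s).card = t.card := card_sdiff_add_card_inter t s
  have h5 : (s ∩ t).card = (t ∩ s).card := by rw [inter_comm]
  omega

lemma parity_symmDiff (s t : Finset α) : (s ∆ t).card % 2 = (s.card + t.card) % 2 := by
  have := card_symmDiff_add s t; omega

lemma symmDiff_pair_subset {X : Finset α} {t s : α} (ht : t ∈ X) (hs : s ∈ X) :
    X ∆ {t, s} = X \ {t, s} := by
  ext x
  by_cases h1 : x = t <;> by_cases h2 : x = s <;>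
    simp_all [Finset.mem_symmDiff]

lemma card_symmDiff_pair_lt {X : Finset α} {t s : α} (ht : t ∈ X) (hs : s ∈ X) :
    (X ∆ {t, s}).card < X.card := by
  rw [symmDiff_pair_subset ht hs]
  refine card_lt_card ?_
  rw [Finset.ssubset_iff_of_subset (sdiff_subset)]
  exact ⟨t, ht, by simp⟩

lemma sd_pair_triple {t u a z : α} (hut : u ≠ t) (hta : t ≠ a) (htz : t ≠ z) (hua : u ≠ a)
    (huz : u ≠ z) (hza : z ≠ a) :
    ({t, u} : Finset α) ∆ {a, z} ∆ {a, u} = {t, z} := by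
  ext x
  simp only [Finset.mem_symmDiff, mem_insert, mem_singleton]
  by_cases h1 : x = t <;> by_cases h2 : x = u <;> by_cases h3 : x = a <;>
    by_cases h4 : x = z <;> simp_all

lemma quad1 {a b s c : α} (hba : b ≠ a) (hsa : s ≠ a) (hca : c ≠ a) (hsb : s ≠ b)
    (hcb : c ≠ b) (hcs : c ≠ s) :
    ({a, b, s, c} : Finset α) ∆ {b, s} = {a, c} := by
  ext x
  simp only [Finset.mem_symmDiff, mem_insert, mem_singleton]
  by_cases h1 : x = a <;> by_cases h2 : x = b <;> by_cases h3 : x = s <;>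
    by_cases h4 : x = c <;> simp_all

lemma quad2 {a b s c : α} (hba : b ≠ a) (hsa : s ≠ a) (hca : c ≠ a) (hsb : s ≠ b)
    (hcb : c ≠ b) (hcs : c ≠ s) :
    ({a, b, s, c} : Finset α) ∆ {a, c} = {b, s} := by
  ext x
  simp only [Finset.mem_symmDiff, mem_insert, mem_singleton]
  by_cases h1 : x = a <;> by_cases h2 : x = b <;> by_cases h3 : x = s <;>
    by_cases h4 : x = c <;> simp_all

lemma quad3 {a b s c : α} (hba : b ≠ a) (hsa : s ≠ a) (hca : c ≠ a) (hsb : s ≠ b)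
    (hcb : c ≠ b) (hcs : c ≠ s) :
    ({a, b, s, c} : Finset α) ∆ {a, b} = {s, c} := by
  ext x
  simp only [Finset.mem_symmDiff, mem_insert, mem_singleton]
  by_cases h1 : x = a <;> by_cases h2 : x = b <;> by_cases h3 : x = s <;>
    by_cases h4 : x = c <;> simp_all

variable {M : Finset (Finset α)}

lemma sd_even (hEven : ∀ A ∈ M, ∀ B ∈ M, A.card % 2 = B.card % 2)
    {X Y : Finset α} (hX : X ∈ M) (hY : Y ∈ M) : (X ∆ Y).card % 2 = 0 := by
  have h1 := parity_symmDiff X Y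
  have h2 := hEven X hX Y hY
  omega

/-- Symmetric exchange with a witness distinct from `a`. -/
lemma exists_ne_exchange (hEven : ∀ A ∈ M, ∀ B ∈ M, A.card % 2 = B.card % 2)
    (hEx : ∀ A ∈ M, ∀ B ∈ M, ∀ a ∈ A ∆ B, ∃ b ∈ A ∆ B, A ∆ {a, b} ∈ M)
    {X Y : Finset α} (hX : X ∈ M) (hY : Y ∈ M) {a : α} (ha : a ∈ X ∆ Y) :
    ∃ b ∈ X ∆ Y, b ≠ a ∧ X ∆ {a, b} ∈ M := by
  obtain ⟨b, hb, hbM⟩ := hEx X hX Y hY a ha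
  refine ⟨b, hb, ?_, hbM⟩
  rintro rfl
  have hpair : ({b, b} : Finset α) = {b} := by simp
  rw [hpair] at hbM
  have h1 := sd_even hEven hX hbM
  have h2 : X ∆ (X ∆ {b}) = {b} := symmDiff_symmDiff_cancel_left X {b}
  rw [h2] at h1
  simp at h1

/-- Wenzel's exchange property, hard direction. -/
lemma wenzel (hEven : ∀ A ∈ M, ∀ B ∈ M, A.card % 2 = B.card % 2)
    (hEx : ∀ A ∈ M, ∀ B ∈ M, ∀ a ∈ A ∆ B, ∃ b ∈ A ∆ B, A ∆ {a, b} ∈ M) :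
    ∀ A ∈ M, ∀ B ∈ M, ∀ a ∈ A ∆ B, ∃ b ∈ (A ∆ B).erase a,
      A ∆ {a, b} ∈ M ∧ B ∆ {a, b} ∈ M := by
  suffices H : ∀ d : ℕ, ∀ A ∈ M, ∀ B ∈ M, (A ∆ B).card = d → ∀ a ∈ A ∆ B,
      ∃ b ∈ (A ∆ B).erase a, A ∆ {a, b} ∈ M ∧ B ∆ {a, b} ∈ M by
    intro A hA B hB a ha
    exact H _ A hA B hB rfl a ha
  intro d
  induction d using Nat.strong_induction_on with
  | _ d IH =>
  intro A hA B hB hcard a ha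
  have hd_even : d % 2 = 0 := by rw [← hcard]; exact sd_even hEven hA hB
  have hd_pos : 0 < d := by rw [← hcard]; exact card_pos.mpr ⟨a, ha⟩
  by_cases hd2 : d = 2
  · -- base case: |A ∆ B| = 2
    subst hd2
    have hcard' : ((A ∆ B).erase a).card = 1 := by
      rw [card_erase_of_mem ha, hcard]
    obtain ⟨b, hb⟩ := card_eq_one.mp hcard'
    have hbmem : b ∈ (A ∆ B).erase a := by rw [hb]; exact mem_singleton_self b
    have hba : b ≠ a := (mem_erase.mp hbmem).1
    have hbAB : b ∈ A ∆ B := (mem_erase.mp hbmem).2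
    have hABeq : ({a, b} : Finset α) = A ∆ B := by
      apply eq_of_subset_of_card_le
      · intro x hx
        rcases mem_insert.mp hx with rfl | hx
        · exact ha
        · exact mem_singleton.mp hx ▸ hbAB
      · rw [hcard, card_pair (Ne.symm hba)]
    refine ⟨b, hbmem, ?_, ?_⟩
    · rw [hABeq, symmDiff_symmDiff_cancel_left]; exact hB
    · rw [hABeq, symmDiff_comm A B, symmDiff_symmDiff_cancel_left]; exact hA
  · -- d ≥ 4
    have hd4 : 4 ≤ d := by omega
    by_contra hbadall
    push_neg at hbadall
    have hbad : ∀ b, b ∈ A ∆ B → b ≠ a → A ∆ {a, b} ∈ M → B ∆ {a, b} ∉ M := by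
      intro b hb hba hAb
      exact hbadall b (mem_erase.mpr ⟨hba, hb⟩) hAb
    obtain ⟨b, hb, hba, hAb⟩ := exists_ne_exchange hEven hEx hA hB ha
    have hb' : b ∈ B ∆ A := by rwa [symmDiff_comm]
    obtain ⟨s, hs', hsb, hBbs⟩ := exists_ne_exchange hEven hEx hB hA hb'
    have hs : s ∈ A ∆ B := by rwa [symmDiff_comm] at hs'
    have hsa : s ≠ a := by
      rintro rfl
      rw [pair_comm] at hBbs
      exact hbad b hb hba hAb hBbs
    by_cases hd6 : 6 ≤ d
    · -- main case d ≥ 6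
      have key : ∀ t u, t ∈ A ∆ B → u ∈ A ∆ B → t ≠ a → u ≠ a → u ≠ t →
          A ∆ {a, t} ∈ M → B ∆ {t, u} ∈ M →
          B ∆ {a, u} ∈ M ∧ ∃ z, z ∈ A ∆ B ∧ z ≠ a ∧ z ≠ t ∧ z ≠ u ∧
            A ∆ {a, z} ∈ M ∧ B ∆ {t, z} ∈ M := by
        intro t u ht hu hta hua hut hAt hBtu
        have hassoc : A ∆ (B ∆ {t, u}) = (A ∆ B) ∆ {t, u} := (symmDiff_assoc A B _).symm
        have hlt : (A ∆ (B ∆ {t, u})).card < d := by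
          rw [hassoc, ← hcard]
          exact card_symmDiff_pair_lt ht hu
        have hanotin : a ∉ ({t, u} : Finset α) := by
          simp only [mem_insert, mem_singleton]
          push_neg
          exact ⟨Ne.symm hta, Ne.symm hua⟩
        have hain : a ∈ A ∆ (B ∆ {t, u}) := by
          rw [hassoc]
          exact Finset.mem_symmDiff.mpr (Or.inl ⟨ha, hanotin⟩)
        obtain ⟨z, hzmem, hAz, hB4⟩ := IH _ hlt A hA (B ∆ {t, u}) hBtu rfl a hain
        have hza : z ≠ a := (mem_erase.mp hzmem).1
        have hz' : z ∈ (A ∆ B) ∆ {t, u} := by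
          rw [← hassoc]; exact (mem_erase.mp hzmem).2
        obtain ⟨hzAB, hzt, hzu⟩ : z ∈ A ∆ B ∧ z ≠ t ∧ z ≠ u := by
          rcases Finset.mem_symmDiff.mp hz' with ⟨h1, h2⟩ | ⟨h1, h2⟩
          · simp only [mem_insert, mem_singleton] at h2
            push_neg at h2
            exact ⟨h1, h2⟩
          · exfalso
            rcases mem_insert.mp h1 with rfl | h1
            · exact h2 ht
            · exact h2 (mem_singleton.mp h1 ▸ hu)
        set B4 := B ∆ {t, u} ∆ {a, z} with hB4def
        have hQ : B4 ∆ B = ({t, u} : Finset α) ∆ {a, z} := by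
          rw [hB4def, symmDiff_assoc B, symmDiff_comm B, symmDiff_assoc, symmDiff_self,
            symmDiff_bot]
        have haQ : a ∈ B4 ∆ B := by
          rw [hQ]
          exact Finset.mem_symmDiff.mpr (Or.inr ⟨mem_insert_self a {z}, hanotin⟩)
        have hQlt : (B4 ∆ B).card < d := by
          rw [hQ]
          calc (({t, u} : Finset α) ∆ {a, z}).card
              ≤ (({t, u} : Finset α) ∪ {a, z}).card := card_le_card symmDiff_le_sup
            _ ≤ ({t, u} : Finset α).card + ({a, z} : Finset α).card := card_union_le _ _
            _ ≤ 4 := by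
                have h1 : ({t, u} : Finset α).card ≤ 2 :=
                  (card_insert_le t {u}).trans (by simp)
                have h2 : ({a, z} : Finset α).card ≤ 2 :=
                  (card_insert_le a {z}).trans (by simp)
                omega
            _ < d := by omega
        obtain ⟨w, hwmem, hB4w, hBw⟩ := IH _ hQlt B4 hB4 B hB rfl a haQ
        have hwa : w ≠ a := (mem_erase.mp hwmem).1
        have hw' : w ∈ ({t, u} : Finset α) ∆ {a, z} := by
          rw [← hQ]; exact (mem_erase.mp hwmem).2
        have hwcases : w = t ∨ w = u ∨ w = z := by
          rcases Finset.mem_symmDiff.mp hw' with ⟨h1, _⟩ | ⟨h1, _⟩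
          · rcases mem_insert.mp h1 with rfl | h1
            · exact Or.inl rfl
            · exact Or.inr (Or.inl (mem_singleton.mp h1))
          · rcases mem_insert.mp h1 with rfl | h1
            · exact absurd rfl hwa
            · exact Or.inr (Or.inr (mem_singleton.mp h1))
        rcases hwcases with rfl | rfl | rfl
        · exact absurd hBw (hbad _ ht hta hAt)
        · -- w = u : the good case
          refine ⟨hBw, z, hzAB, hza, hzt, hzu, hAz, ?_⟩
          have hP : B4 ∆ {a, w} = B ∆ {t, z} := by
            rw [hB4def, symmDiff_assoc B, symmDiff_assoc B,
              sd_pair_triple hut hta (Ne.symm hzt) hua (Ne.symm hzu) hza]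
          rwa [hP] at hB4w
        · exact absurd hBw (hbad _ hzAB hza hAz)
      obtain ⟨hBas, z, hzAB, hza, hzb, hzs, hAz, hBbz⟩ :=
        key b s hb hs hba hsa hsb hAb hBbs
      obtain ⟨hBaz, -⟩ := key b z hb hzAB hba hza hzb hAb hBbz
      exact hbad z hzAB hza hAz hBaz
    · -- case d = 4
      have hd4' : d = 4 := by omega
      have hsmem : s ∈ ((A ∆ B).erase a).erase b :=
        mem_erase.mpr ⟨hsb, mem_erase.mpr ⟨hsa, hs⟩⟩
      have hE : ((((A ∆ B).erase a).erase b).erase s).card = 1 := by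
        rw [card_erase_of_mem hsmem, card_erase_of_mem (mem_erase.mpr ⟨hba, hb⟩),
          card_erase_of_mem ha, hcard, hd4']
      obtain ⟨c, hc⟩ := card_eq_one.mp hE
      have hcmem : c ∈ (((A ∆ B).erase a).erase b).erase s := by
        rw [hc]; exact mem_singleton_self c
      have hcs : c ≠ s := (mem_erase.mp hcmem).1
      have hcb : c ≠ b := (mem_erase.mp (mem_erase.mp hcmem).2).1
      have hca : c ≠ a := (mem_erase.mp (mem_erase.mp (mem_erase.mp hcmem).2).2).1
      have hcAB : c ∈ A ∆ B := (mem_erase.mp (mem_erase.mp (mem_erase.mp hcmem).2).2).2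
      have hD : ({a, b, s, c} : Finset α) = A ∆ B := by
        apply eq_of_subset_of_card_le
        · intro x hx
          simp only [mem_insert, mem_singleton] at hx
          rcases hx with rfl | rfl | rfl | rfl
          · exact ha
          · exact hb
          · exact hs
          · exact hcAB
        · rw [hcard, hd4']
          have h4c : ({a, b, s, c} : Finset α).card = 4 := by
            rw [show ({a, b, s, c} : Finset α) = insert a (insert b (insert s {c})) from rfl]
            rw [card_insert_of_notMem, card_insert_of_notMem, card_insert_of_notMem,
              card_singleton]
            · simp only [mem_singleton]; exact Ne.symm hcs
            · simp only [mem_insert, mem_singleton]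
              push_neg
              exact ⟨Ne.symm hsb, Ne.symm hcb⟩
            · simp only [mem_insert, mem_singleton]
              push_neg
              exact ⟨Ne.symm hba, Ne.symm hsa, Ne.symm hca⟩
          omega
      have hI1 : (A ∆ B) ∆ {b, s} = ({a, c} : Finset α) := by
        rw [← hD]; exact quad1 hba hsa hca hsb hcb hcs
      have hI2 : (A ∆ B) ∆ {a, c} = ({b, s} : Finset α) := by
        rw [← hD]; exact quad2 hba hsa hca hsb hcb hcs
      have hI3 : (A ∆ B) ∆ {a, b} = ({s, c} : Finset α) := by
        rw [← hD]; exact quad3 hba hsa hca hsb hcb hcs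
      have hAc : A ∆ {a, c} ∈ M := by
        have he1 : A ∆ ({a, c} : Finset α) = B ∆ {b, s} := by
          rw [← hI1, ← symmDiff_assoc, symmDiff_symmDiff_cancel_left]
        rwa [← he1] at hBbs
      have he2 : B ∆ ({a, c} : Finset α) = A ∆ {b, s} := by
        rw [← hI2, ← symmDiff_assoc, symmDiff_symmDiff_cancel_left]
      have he3 : B ∆ ({a, b} : Finset α) = A ∆ {s, c} := by
        rw [← hI3, ← symmDiff_assoc, symmDiff_symmDiff_cancel_left]
      -- third exchange: at s, from A's side
      obtain ⟨x, hx', hxs, hAsx⟩ := exists_ne_exchange hEven hEx hA hB hs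
      have hxcases : x = a ∨ x = b ∨ x = c := by
        rw [← hD] at hx'
        simp only [mem_insert, mem_singleton] at hx'
        rcases hx' with rfl | rfl | rfl | rfl
        · exact Or.inl rfl
        · exact Or.inr (Or.inl rfl)
        · exact absurd rfl hxs
        · exact Or.inr (Or.inr rfl)
      have hAs : A ∆ {a, s} ∈ M := by
        rcases hxcases with rfl | rfl | rfl
        · rwa [pair_comm] at hAsx
        · rw [pair_comm, ← he2] at hAsx
          exact absurd hAsx (hbad c hcAB hca hAc)
        · rw [← he3] at hAsx
          exact absurd hAsx (hbad _ hb hba hAb)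
      -- fourth exchange: at a, from B's side
      have ha' : a ∈ B ∆ A := by rwa [symmDiff_comm]
      obtain ⟨y, hy', hya, hBay⟩ := exists_ne_exchange hEven hEx hB hA ha'
      have hy : y ∈ A ∆ B := by rwa [symmDiff_comm] at hy'
      have hycases : y = b ∨ y = s ∨ y = c := by
        rw [← hD] at hy
        simp only [mem_insert, mem_singleton] at hy
        rcases hy with rfl | rfl | rfl | rfl
        · exact absurd rfl hya
        · exact Or.inl rfl
        · exact Or.inr (Or.inl rfl)
        · exact Or.inr (Or.inr rfl)
      rcases hycases with rfl | rfl | rfl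
      · exact hbad y hb hba hAb hBay
      · exact hbad y hs hsa hAs hBay
      · exact hbad y hcAB hca hAc hBay

lemma three_to_two
    (h3 : ∀ A ∈ M, ∀ B ∈ M, ∀ a ∈ A ∆ B, ∃ b ∈ (A ∆ B).erase a,
      A ∆ {a, b} ∈ M ∧ B ∆ {a, b} ∈ M) :
    ∀ A ∈ M, ∀ B ∈ M, A ≠ B → ∃ a ∈ A ∆ B, ∃ b ∈ A ∆ B, a ≠ b ∧
      A ∆ {a, b} ∈ M ∧ B ∆ {a, b} ∈ M := by
  intro A hA B hB hne
  obtain ⟨a, ha⟩ := Finset.symmDiff_nonempty.mpr hne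
  obtain ⟨b, hbmem, h1, h2⟩ := h3 A hA B hB a ha
  exact ⟨a, ha, b, (mem_erase.mp hbmem).2, Ne.symm (mem_erase.mp hbmem).1, h1, h2⟩

lemma two_to_even
    (h2 : ∀ A ∈ M, ∀ B ∈ M, A ≠ B → ∃ a ∈ A ∆ B, ∃ b ∈ A ∆ B, a ≠ b ∧
      A ∆ {a, b} ∈ M ∧ B ∆ {a, b} ∈ M) :
    ∀ A ∈ M, ∀ B ∈ M, A.card % 2 = B.card % 2 := by
  suffices H : ∀ d : ℕ, ∀ A ∈ M, ∀ B ∈ M, (A ∆ B).card = d → A.card % 2 = B.card % 2 by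
    intro A hA B hB
    exact H _ A hA B hB rfl
  intro d
  induction d using Nat.strong_induction_on with
  | _ d IH =>
  intro A hA B hB hcard
  by_cases hne : A = B
  · rw [hne]
  · obtain ⟨a, haAB, b, hbAB, hab, hAM, hBM⟩ := h2 A hA B hB hne
    have h1 : A ∆ {a, b} ∆ B = (A ∆ B) ∆ {a, b} := by
      rw [symmDiff_assoc, symmDiff_comm ({a, b} : Finset α) B, ← symmDiff_assoc]
    have hlt : (A ∆ {a, b} ∆ B).card < d := by
      rw [h1, ← hcard]; exact card_symmDiff_pair_lt haAB hbAB
    have hpar := IH _ hlt (A ∆ {a, b}) hAM B hB rfl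
    have hAA : (A ∆ {a, b}).card % 2 = A.card % 2 := by
      have hps := parity_symmDiff A ({a, b} : Finset α)
      rw [card_pair hab] at hps
      omega
    omega

lemma two_to_exchange
    (h2 : ∀ A ∈ M, ∀ B ∈ M, A ≠ B → ∃ a ∈ A ∆ B, ∃ b ∈ A ∆ B, a ≠ b ∧
      A ∆ {a, b} ∈ M ∧ B ∆ {a, b} ∈ M) :
    ∀ A ∈ M, ∀ B ∈ M, ∀ a ∈ A ∆ B, ∃ b ∈ A ∆ B, A ∆ {a, b} ∈ M := by
  suffices H : ∀ d : ℕ, ∀ A ∈ M, ∀ B ∈ M, (A ∆ B).card = d → ∀ a ∈ A ∆ B,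
      ∃ b ∈ A ∆ B, A ∆ {a, b} ∈ M by
    intro A hA B hB a ha
    exact H _ A hA B hB rfl a ha
  intro d
  induction d using Nat.strong_induction_on with
  | _ d IH =>
  intro A hA B hB hcard a ha
  have hne : A ≠ B := by
    rintro rfl
    rw [symmDiff_self] at ha
    exact absurd ha (notMem_empty a)
  obtain ⟨x, hx, y, hy, hxy, hAM, hBM⟩ := h2 A hA B hB hne
  by_cases hax : a = x
  · subst hax; exact ⟨y, hy, hAM⟩
  by_cases hay : a = y
  · subst hay; exact ⟨x, hx, by rwa [pair_comm]⟩
  have h1 : A ∆ (B ∆ {x, y}) = (A ∆ B) ∆ {x, y} := (symmDiff_assoc A B _).symm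
  have hlt : (A ∆ (B ∆ {x, y})).card < d := by
    rw [h1, ← hcard]; exact card_symmDiff_pair_lt hx hy
  have hain : a ∈ A ∆ (B ∆ {x, y}) := by
    rw [h1]
    refine Finset.mem_symmDiff.mpr (Or.inl ⟨ha, ?_⟩)
    simp only [mem_insert, mem_singleton]
    push_neg
    exact ⟨hax, hay⟩
  obtain ⟨v, hv, hvM⟩ := IH _ hlt A hA (B ∆ {x, y}) hBM rfl a hain
  have hvAB : v ∈ A ∆ B := by
    rw [h1] at hv
    rcases Finset.mem_symmDiff.mp hv with ⟨hv1, _⟩ | ⟨hv1, hv2⟩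
    · exact hv1
    · exfalso
      rcases mem_insert.mp hv1 with rfl | hv1
      · exact hv2 hx
      · exact hv2 (mem_singleton.mp hv1 ▸ hy)
  exact ⟨v, hvAB, hvM⟩

end EvenDeltaAux

/-- For a set system on `[n]`, the following are equivalent:
being an even Δ-matroid, the strong exchange property for even Δ-matroids,
and Wenzel's exchange property. -/
theorem even_delta_matroid_tfae
    {n : ℕ} (M : Finset (Finset (Fin n))) :
    [ (∀ A ∈ M, ∀ B ∈ M, A.card % 2 = B.card % 2) ∧ SymmetricExchange M,
      ∀ A ∈ M, ∀ B ∈ M, A ≠ B → ∃ a ∈ A ∆ B, ∃ b ∈ A ∆ B, a ≠ b ∧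
        A ∆ {a, b} ∈ M ∧ B ∆ {a, b} ∈ M,
      ∀ A ∈ M, ∀ B ∈ M, ∀ a ∈ A ∆ B, ∃ b ∈ (A ∆ B).erase a,
        A ∆ {a, b} ∈ M ∧ B ∆ {a, b} ∈ M ].TFAE := by
  tfae_have 1 → 3 := fun h => EvenDeltaAux.wenzel h.1 h.2
  tfae_have 3 → 2 := fun h => EvenDeltaAux.three_to_two h
  tfae_have 2 → 1 := fun h => ⟨EvenDeltaAux.two_to_even h, EvenDeltaAux.two_to_exchange h⟩
  tfae_finish
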